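/- Let S = {s_1, ..., s_m} ⊆ Z^n and suppose over some field k the kernel of k[y_1,...,y_m] → k[Z^n], y_i ↦ x^{s_i}, is generated by binomials y^{b_1}−y^{c_1}, ..., y^{b_l}−y^{c_l}. Then over any other field k' the same binomials generate the corresponding toric ideal (the kernel of the analogous map over k'). -/

import Mathlib

open MvPolynomial AddMonoidAlgebra

namespace ToricAux

variable {m n l : ℕ}

/-- The exponent-sum monoid hom. -/
noncomputable def σhom (s : Fin m → Fin n → ℤ) : (Fin m →₀ ℕ) →+ (Fin n → ℤ) :=
  (Finsupp.linearCombination ℕ s).toAddMonoidHom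

lemma σhom_apply (s : Fin m → Fin n → ℤ) (u : Fin m →₀ ℕ) :
    σhom s u = ∑ i ∈ u.support, u i • s i := by
  simp [σhom, Finsupp.linearCombination_apply, Finsupp.sum]

lemma aeval_eq (K : Type) [Field K] (s : Fin m → Fin n → ℤ) (f : MvPolynomial (Fin m) K) :
    (MvPolynomial.aeval (fun i : Fin m => AddMonoidAlgebra.single (s i) (1 : K)) :
      MvPolynomial (Fin m) K →ₐ[K] AddMonoidAlgebra K (Fin n → ℤ)) f
      = AddMonoidAlgebra.mapDomain (σhom s) f := by
  induction f using MvPolynomial.induction_on' with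
  | monomial u a =>
      rw [← MvPolynomial.single_eq_monomial, AddMonoidAlgebra.mapDomain_single]
      rw [MvPolynomial.single_eq_monomial, MvPolynomial.aeval_monomial]
      have : (u.prod fun i k => AddMonoidAlgebra.single (s i) (1 : K) ^ k)
          = AddMonoidAlgebra.single (σhom s u) (1 : K) := by
        rw [Finsupp.prod]
        simp_rw [AddMonoidAlgebra.single_pow, one_pow]
        rw [AddMonoidAlgebra.prod_single, σhom_apply]
        simp
      rw [this]
      rw [AddMonoidAlgebra.coe_algebraMap]
      show AddMonoidAlgebra.single 0 a * AddMonoidAlgebra.single (σhom s u) 1 = _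
      rw [AddMonoidAlgebra.single_mul_single]
      simp
  | add p q hp hq =>
      rw [map_add, hp, hq, AddMonoidAlgebra.mapDomain_add]

/-- Kernel-span lemma: if `mapDomain φ f = 0` then `f` is a `K`-combination of
binomials `single u 1 - single v 1` with `φ u = φ v`. -/
lemma mem_span_of_mapDomain_eq_zero {K G H : Type*} [Field K] [AddCommMonoid G] [AddCommMonoid H]
    (φ : G →+ H) :
    ∀ (N : ℕ) (f : AddMonoidAlgebra K G), f.coeff.support.card ≤ N → AddMonoidAlgebra.mapDomain φ f = 0 →
      f ∈ Submodule.span K {x : AddMonoidAlgebra K G |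
        ∃ u v, φ u = φ v ∧ x = AddMonoidAlgebra.single u (1 : K) - AddMonoidAlgebra.single v 1} := by
  classical
  intro N
  induction N with
  | zero =>
      intro f hcard _
      have : f = 0 := AddMonoidAlgebra.coeff_eq_zero.mp (Finsupp.card_support_eq_zero.mp (Nat.le_antisymm hcard (Nat.zero_le _)))
      simp [this]
  | succ N ih =>
      intro f hcard hf
      by_cases h0 : f = 0
      · simp [h0]
      obtain ⟨u, hu⟩ := Finsupp.support_nonempty_iff.mpr (fun h => h0 (AddMonoidAlgebra.coeff_eq_zero.mp h))
      -- fiber sum is zero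
      have hsum : ∑ a ∈ f.coeff.support.filter (fun a => φ a = φ u), f.coeff a = 0 := by
        have hpt : Finsupp.mapDomain φ f.coeff (φ u) = 0 :=
          congrArg (fun x => AddMonoidAlgebra.coeff x (φ u)) hf
        rw [Finsupp.mapDomain, Finsupp.sum_apply] at hpt
        rw [← hpt, Finsupp.sum, Finset.sum_filter]
        apply Finset.sum_congr rfl
        intro a _
        rw [Finsupp.single_apply]
      have hufilter : u ∈ f.coeff.support.filter (fun a => φ a = φ u) := by
        simp [Finset.mem_filter, hu]
      have hfu : f.coeff u ≠ 0 := Finsupp.mem_support_iff.mp hu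
      obtain ⟨v, hvfil, hvu⟩ :
          ∃ v ∈ f.coeff.support.filter (fun a => φ a = φ u), v ≠ u := by
        by_contra hcon
        push_neg at hcon
        have : f.coeff.support.filter (fun a => φ a = φ u) = {u} :=
          Finset.eq_singleton_iff_unique_mem.mpr ⟨hufilter, fun x hx => hcon x hx⟩
        rw [this, Finset.sum_singleton] at hsum
        exact hfu hsum
      have hφv : φ v = φ u := (Finset.mem_filter.mp hvfil).2
      have hv : v ∈ f.coeff.support := (Finset.mem_filter.mp hvfil).1
      set g : AddMonoidAlgebra K G :=
        f - f.coeff u • (AddMonoidAlgebra.single u (1 : K) - AddMonoidAlgebra.single v 1) with hg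
      have hfug : f.coeff u • (AddMonoidAlgebra.single u (1 : K) - AddMonoidAlgebra.single v 1)
          = AddMonoidAlgebra.single u (f.coeff u) - AddMonoidAlgebra.single v (f.coeff u) := by
        rw [smul_sub, AddMonoidAlgebra.smul_single', AddMonoidAlgebra.smul_single']
        simp
      have hgsupp : g.coeff.support ⊆ f.coeff.support.erase u := by
        intro a ha
        have hga : g.coeff a ≠ 0 := Finsupp.mem_support_iff.mp ha
        rw [hg, hfug] at hga
        have hgaval : (f - (AddMonoidAlgebra.single u (f.coeff u)
              - AddMonoidAlgebra.single v (f.coeff u))).coeff a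
            = f.coeff a - (if u = a then f.coeff u else 0) + (if v = a then f.coeff u else 0) := by
          show f.coeff a - ((AddMonoidAlgebra.single u (f.coeff u)).coeff a
            - (AddMonoidAlgebra.single v (f.coeff u)).coeff a) = _
          rw [AddMonoidAlgebra.coeff_single, AddMonoidAlgebra.coeff_single,
            Finsupp.single_apply, Finsupp.single_apply]
          ring
        rw [hgaval] at hga
        rcases eq_or_ne a u with rfl | hau
        · rw [if_pos rfl, if_neg hvu] at hga
          exact absurd (by ring) hga
        · rw [Finset.mem_erase]
          refine ⟨hau, Finsupp.mem_support_iff.mpr fun hfa => ?_⟩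
          rcases eq_or_ne v a with rfl | hva
          · exact (Finsupp.mem_support_iff.mp hv) hfa
          · rw [hfa, if_neg fun hh => hau hh.symm, if_neg hva] at hga
            exact absurd (by ring) hga
      have hgcard : g.coeff.support.card ≤ N := by
        calc g.coeff.support.card ≤ (f.coeff.support.erase u).card := Finset.card_le_card hgsupp
        _ = f.coeff.support.card - 1 := Finset.card_erase_of_mem hu
        _ ≤ N := by omega
      have hmds : ∀ p q : AddMonoidAlgebra K G, AddMonoidAlgebra.mapDomain (φ : G → H) (p - q)
          = AddMonoidAlgebra.mapDomain φ p - AddMonoidAlgebra.mapDomain φ q := by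
        intro p q
        apply AddMonoidAlgebra.coeff_injective
        exact Finsupp.mapDomain_sub
      have hgker : AddMonoidAlgebra.mapDomain (φ : G → H) g = 0 := by
        rw [hg, hfug, hmds, hmds]
        show _ - (AddMonoidAlgebra.mapDomain _ (AddMonoidAlgebra.single u (f.coeff u))
          - AddMonoidAlgebra.mapDomain _ (AddMonoidAlgebra.single v (f.coeff u))) = 0
        rw [AddMonoidAlgebra.mapDomain_single, AddMonoidAlgebra.mapDomain_single, hf, hφv]
        simp
      have hgmem := ih g hgcard hgker
      have hfeq : f = g + f.coeff u • (AddMonoidAlgebra.single u (1 : K)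
          - AddMonoidAlgebra.single v 1) := by
        rw [hg]; ring
      rw [hfeq]
      exact Submodule.add_mem _ hgmem (Submodule.smul_mem _ _
        (Submodule.subset_span ⟨u, v, (hφv ▸ rfl : φ u = φ v), rfl⟩))

variable (b c : Fin l → (Fin m →₀ ℕ))

/-- The base relation. -/
def brel (u v : Fin m →₀ ℕ) : Prop := ∃ j, u = b j ∧ v = c j

/-- The binomial ideal over `K`. -/
noncomputable def bIdeal (K : Type) [Field K] : Ideal (MvPolynomial (Fin m) K) :=
  Ideal.span {f : MvPolynomial (Fin m) K | ∃ j : Fin l,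
    f = MvPolynomial.monomial (b j) (1 : K) - MvPolynomial.monomial (c j) (1 : K)}

/-- Membership of binomials in the binomial ideal is an additive congruence. -/
def idealCon (K : Type) [Field K] : AddCon (Fin m →₀ ℕ) where
  r u v := (MvPolynomial.monomial u (1 : K) - MvPolynomial.monomial v 1 : MvPolynomial (Fin m) K)
      ∈ bIdeal b c K
  iseqv := by
    constructor
    · intro u; simp
    · intro u v huv
      have := (bIdeal b c K).neg_mem huv
      simpa using this
    · intro u v w huv hvw
      have := (bIdeal b c K).add_mem huv hvw
      simpa using this
  add' := by
    intro w x y z hwx hyz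
    have h1 : (MvPolynomial.monomial y (1 : K)) *
        (MvPolynomial.monomial w (1:K) - MvPolynomial.monomial x 1) ∈ bIdeal b c K :=
      Ideal.mul_mem_left _ _ hwx
    have h2 : (MvPolynomial.monomial x (1 : K)) *
        (MvPolynomial.monomial y (1:K) - MvPolynomial.monomial z 1) ∈ bIdeal b c K :=
      Ideal.mul_mem_left _ _ hyz
    have hsum := (bIdeal b c K).add_mem h1 h2
    have heq : (MvPolynomial.monomial y (1 : K)) *
        (MvPolynomial.monomial w (1:K) - MvPolynomial.monomial x 1)
        + (MvPolynomial.monomial x (1 : K)) *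
        (MvPolynomial.monomial y (1:K) - MvPolynomial.monomial z 1)
        = MvPolynomial.monomial (w + y) (1:K) - MvPolynomial.monomial (x + z) 1 := by
      rw [mul_sub, mul_sub, MvPolynomial.monomial_mul, MvPolynomial.monomial_mul,
        MvPolynomial.monomial_mul, MvPolynomial.monomial_mul]
      rw [show y + w = w + y from add_comm _ _, show x + y = y + x from add_comm _ _]
      ring_nf
    rwa [heq] at hsum

/-- (A') if `u ∼ v` then the binomial lies in the binomial ideal, over any field. -/
lemma binomial_mem_of_rel (K : Type) [Field K] {u v : Fin m →₀ ℕ}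
    (huv : addConGen (brel b c) u v) :
    (MvPolynomial.monomial u (1 : K) - MvPolynomial.monomial v 1 : MvPolynomial (Fin m) K)
      ∈ bIdeal b c K := by
  refine (AddCon.addConGen_le (c := idealCon b c K)).2 ?_ huv
  rintro x y ⟨j, rfl, rfl⟩
  exact Ideal.subset_span ⟨j, rfl⟩

/-- (B') over a field, binomial membership forces the congruence. -/
lemma rel_of_binomial_mem (K : Type) [Field K] {u v : Fin m →₀ ℕ}
    (hmem : (MvPolynomial.monomial u (1 : K) - MvPolynomial.monomial v 1 :
      MvPolynomial (Fin m) K) ∈ bIdeal b c K) :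
    addConGen (brel b c) u v := by
  classical
  set Γ := addConGen (brel b c) with hΓ
  let ψ : MvPolynomial (Fin m) K →+* AddMonoidAlgebra K Γ.Quotient :=
    AddMonoidAlgebra.mapDomainRingHom K Γ.mk'
  have hψsingle : ∀ (w : Fin m →₀ ℕ) (a : K),
      ψ (MvPolynomial.monomial w a) = AddMonoidAlgebra.single (Γ.mk' w) a := by
    intro w a
    show AddMonoidAlgebra.mapDomain _ _ = _
    rw [← MvPolynomial.single_eq_monomial, AddMonoidAlgebra.mapDomain_single]
  have hker : bIdeal b c K ≤ RingHom.ker ψ := by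
    rw [bIdeal, Ideal.span_le]
    rintro x ⟨j, rfl⟩
    rw [SetLike.mem_coe, RingHom.mem_ker, map_sub, hψsingle, hψsingle]
    have hbc : Γ.mk' (b j) = Γ.mk' (c j) := by
      show ((b j : Γ.Quotient)) = (c j : Γ.Quotient)
      exact (AddCon.eq Γ).mpr (AddConGen.Rel.of _ _ ⟨j, rfl, rfl⟩)
    rw [hbc, sub_self]
  have h0 : ψ (MvPolynomial.monomial u (1 : K) - MvPolynomial.monomial v 1) = 0 :=
    hker hmem
  rw [map_sub, hψsingle, hψsingle, sub_eq_zero] at h0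
  have : Γ.mk' u = Γ.mk' v :=
    AddMonoidAlgebra.single_left_injective (one_ne_zero (α := K)) h0
  exact (AddCon.eq Γ).mp this

end ToricAux

/-- If over some field `k` the toric ideal of `S = {s₁,…,sₘ} ⊆ ℤⁿ` (the kernel of
`k[y₁,…,yₘ] → k[ℤⁿ]`, `yᵢ ↦ x^{sᵢ}`) is generated by the binomials
`y^{bⱼ} − y^{cⱼ}`, then over any other field `k'` the same binomials generate the
corresponding toric ideal. -/
theorem stmt_6 (k k' : Type) [Field k] [Field k'] (n m l : ℕ)
    (s : Fin m → (Fin n → ℤ)) (b c : Fin l → (Fin m →₀ ℕ))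
    (h : RingHom.ker (MvPolynomial.aeval
          (fun i : Fin m => AddMonoidAlgebra.single (s i) (1 : k)) :
          MvPolynomial (Fin m) k →ₐ[k] AddMonoidAlgebra k (Fin n → ℤ)) =
        Ideal.span {f : MvPolynomial (Fin m) k | ∃ j : Fin l,
          f = MvPolynomial.monomial (b j) (1 : k) - MvPolynomial.monomial (c j) (1 : k)}) :
    RingHom.ker (MvPolynomial.aeval
          (fun i : Fin m => AddMonoidAlgebra.single (s i) (1 : k')) :
          MvPolynomial (Fin m) k' →ₐ[k'] AddMonoidAlgebra k' (Fin n → ℤ)) =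
        Ideal.span {f : MvPolynomial (Fin m) k' | ∃ j : Fin l,
          f = MvPolynomial.monomial (b j) (1 : k') - MvPolynomial.monomial (c j) (1 : k')} := by
  classical
  open ToricAux in
  have haevalmono : ∀ (K : Type) [Field K] (w : Fin m →₀ ℕ) (a : K),
      (MvPolynomial.aeval (fun i : Fin m => AddMonoidAlgebra.single (s i) (1 : K)) :
        MvPolynomial (Fin m) K →ₐ[K] AddMonoidAlgebra K (Fin n → ℤ))
        (MvPolynomial.monomial w a) = AddMonoidAlgebra.single (ToricAux.σhom s w) a := by
    intro K _ w a
    rw [ToricAux.aeval_eq, ← MvPolynomial.single_eq_monomial, AddMonoidAlgebra.mapDomain_single]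
  -- Step 1 : σ (b j) = σ (c j)
  have hσbc : ∀ j, ToricAux.σhom s (b j) = ToricAux.σhom s (c j) := by
    intro j
    have hmem : (MvPolynomial.monomial (b j) (1 : k) - MvPolynomial.monomial (c j) 1 :
        MvPolynomial (Fin m) k) ∈ RingHom.ker (MvPolynomial.aeval
          (fun i : Fin m => AddMonoidAlgebra.single (s i) (1 : k)) :
          MvPolynomial (Fin m) k →ₐ[k] AddMonoidAlgebra k (Fin n → ℤ)) := by
      rw [h]; exact Ideal.subset_span ⟨j, rfl⟩
    rw [RingHom.mem_ker, map_sub, haevalmono, haevalmono, sub_eq_zero] at hmem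
    exact AddMonoidAlgebra.single_left_injective (one_ne_zero (α := k)) hmem
  -- Step 2 : σ u = σ v → u ∼ v
  have hrel : ∀ u v : Fin m →₀ ℕ, ToricAux.σhom s u = ToricAux.σhom s v →
      addConGen (ToricAux.brel b c) u v := by
    intro u v huv
    have hmem : (MvPolynomial.monomial u (1 : k) - MvPolynomial.monomial v 1 :
        MvPolynomial (Fin m) k) ∈ RingHom.ker (MvPolynomial.aeval
          (fun i : Fin m => AddMonoidAlgebra.single (s i) (1 : k)) :
          MvPolynomial (Fin m) k →ₐ[k] AddMonoidAlgebra k (Fin n → ℤ)) := by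
      rw [RingHom.mem_ker, map_sub, haevalmono, haevalmono, huv, sub_self]
    rw [h] at hmem
    exact ToricAux.rel_of_binomial_mem b c k hmem
  -- Step 3
  apply le_antisymm
  · intro f hf
    rw [RingHom.mem_ker, ToricAux.aeval_eq] at hf
    have hspan := ToricAux.mem_span_of_mapDomain_eq_zero (ToricAux.σhom s)
      (AddMonoidAlgebra.coeff f).support.card f le_rfl hf
    have hsub : Submodule.span k' {x : AddMonoidAlgebra k' (Fin m →₀ ℕ) |
          ∃ u v, ToricAux.σhom s u = ToricAux.σhom s v ∧
            x = AddMonoidAlgebra.single u (1 : k') - AddMonoidAlgebra.single v 1}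
        ≤ (ToricAux.bIdeal b c k').restrictScalars k' := by
      rw [Submodule.span_le]
      rintro x ⟨u, v, huv, rfl⟩
      show (_ : MvPolynomial (Fin m) k') ∈ ToricAux.bIdeal b c k'
      have := ToricAux.binomial_mem_of_rel b c k' (hrel u v huv)
      rwa [← MvPolynomial.single_eq_monomial, ← MvPolynomial.single_eq_monomial] at this
    exact hsub hspan
  · rw [Ideal.span_le]
    rintro x ⟨j, rfl⟩
    rw [SetLike.mem_coe, RingHom.mem_ker, map_sub, haevalmono, haevalmono, hσbc, sub_self]
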